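/- Let a, b be nonzero rational numbers and d ∈ ℚ an element that is not a square in ℚ, and let K = ℚ[X]/(X² − d) be the corresponding quadratic field, with √d denoting the class of X. Then for every ℚ-algebra homomorphism φ : K → ℍ[ℚ,a,b] the quaternion φ(√d) is pure, say φ(√d) = x·i + y·j + z·k, and the assignment φ ↦ (x,y,z) is a bijection from the set of ℚ-algebra homomorphisms K → ℍ[ℚ,a,b] onto the set of representations {(x,y,z) ∈ ℚ³ : −a x² − b y² + a b z² = −d} of −d by the ternary normic form of ℍ[ℚ,a,b]. -/

import Mathlib

open scoped Quaternion
open Polynomial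

theorem pure_aux (a b d : ℚ) (hd : ¬ ∃ s : ℚ, s ^ 2 = d) (q : ℍ[ℚ, a, b])
    (h : q * q = (d : ℚ)) : q.re = 0 ∧ -a * q.imI ^ 2 - b * q.imJ ^ 2 + a * b * q.imK ^ 2 = -d := by
  have hre : q.re * q.re + a * q.imI * q.imI + b * q.imJ * q.imJ - a * b * q.imK * q.imK = d :=
    by have h' := congrArg QuaternionAlgebra.re h; simp only [QuaternionAlgebra.re_mul, QuaternionAlgebra.re_coe] at h'; linear_combination h'
  have hi : q.re * q.imI + q.imI * q.re - b * q.imJ * q.imK + b * q.imK * q.imJ = 0 :=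
    by have h' := congrArg QuaternionAlgebra.imI h; simp only [QuaternionAlgebra.imI_mul, QuaternionAlgebra.imI_coe] at h'; linear_combination h'
  have hj : q.re * q.imJ + a * q.imI * q.imK + q.imJ * q.re - a * q.imK * q.imI = 0 :=
    by have h' := congrArg QuaternionAlgebra.imJ h; simp only [QuaternionAlgebra.imJ_mul, QuaternionAlgebra.imJ_coe] at h'; linear_combination h'
  have hk : q.re * q.imK + q.imI * q.imJ - q.imJ * q.imI + q.imK * q.re = 0 :=
    by have h' := congrArg QuaternionAlgebra.imK h; simp only [QuaternionAlgebra.imK_mul, QuaternionAlgebra.imK_coe] at h'; linear_combination h'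
  have h0 : q.re = 0 := by
    by_contra hw
    have hx : q.imI = 0 := by
      have h2 : (2 * q.re) * q.imI = 0 := by linear_combination hi
      rcases mul_eq_zero.mp h2 with h' | h'
      · exact absurd (by linarith) hw
      · exact h'
    have hy : q.imJ = 0 := by
      have h2 : (2 * q.re) * q.imJ = 0 := by linear_combination hj
      rcases mul_eq_zero.mp h2 with h' | h'
      · exact absurd (by linarith) hw
      · exact h'
    have hz : q.imK = 0 := by
      have h2 : (2 * q.re) * q.imK = 0 := by linear_combination hk
      rcases mul_eq_zero.mp h2 with h' | h'
      · exact absurd (by linarith) hw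
      · exact h'
    rw [hx, hy, hz] at hre
    exact hd ⟨q.re, by linear_combination hre⟩
  exact ⟨h0, by rw [h0] at hre; linear_combination -hre⟩

theorem embeddings_biject_with_representations_by_ternary_normic_form
    (a b d : ℚ) (ha : a ≠ 0) (hb : b ≠ 0) (hd : ¬ ∃ s : ℚ, s ^ 2 = d) :
    (∀ φ : AdjoinRoot (X ^ 2 - C d) →ₐ[ℚ] ℍ[ℚ, a, b],
        (φ (AdjoinRoot.root (X ^ 2 - C d))).re = 0) ∧
    Set.BijOn
      (fun φ : AdjoinRoot (X ^ 2 - C d) →ₐ[ℚ] ℍ[ℚ, a, b] =>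
        ((φ (AdjoinRoot.root (X ^ 2 - C d))).imI,
          (φ (AdjoinRoot.root (X ^ 2 - C d))).imJ,
          (φ (AdjoinRoot.root (X ^ 2 - C d))).imK))
      Set.univ
      {v : ℚ × ℚ × ℚ | -a * v.1 ^ 2 - b * v.2.1 ^ 2 + a * b * v.2.2 ^ 2 = -d} := by
  set f : ℚ[X] := X ^ 2 - C d with hf
  have hroot : (AdjoinRoot.root f) ^ 2 = algebraMap ℚ (AdjoinRoot f) d := by
    have h := AdjoinRoot.mk_self (f := f)
    rw [hf, map_sub, map_pow, AdjoinRoot.mk_X, AdjoinRoot.mk_C, sub_eq_zero] at h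
    rw [← AdjoinRoot.algebraMap_eq] at h
    exact h
  have key : ∀ φ : AdjoinRoot f →ₐ[ℚ] ℍ[ℚ, a, b],
      φ (AdjoinRoot.root f) * φ (AdjoinRoot.root f) = ((d : ℚ) : ℍ[ℚ, a, b]) := by
    intro φ
    rw [← map_mul, ← sq, hroot, AlgHom.commutes, QuaternionAlgebra.coe_algebraMap]
  have pure := fun φ => pure_aux a b d hd _ (key φ)
  refine ⟨fun φ => (pure φ).1, ?_, ?_, ?_⟩
  · intro φ _
    exact (pure φ).2
  · intro φ _ ψ _ h
    simp only [Prod.mk.injEq] at h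
    have hq : φ (AdjoinRoot.root f) = ψ (AdjoinRoot.root f) :=
      QuaternionAlgebra.ext ((pure φ).1.trans (pure ψ).1.symm) h.1 h.2.1 h.2.2
    exact AdjoinRoot.algHom_ext hq
  · rintro ⟨x, y, z⟩ hv
    simp only [Set.mem_setOf_eq] at hv
    set q : ℍ[ℚ, a, b] := ⟨0, x, y, z⟩ with hq
    have hsq : q * q = ((d : ℚ) : ℍ[ℚ, a, b]) := by
      ext
      · simp only [hq, QuaternionAlgebra.re_mul, QuaternionAlgebra.re_coe]
        linear_combination -hv
      · simp only [hq, QuaternionAlgebra.imI_mul, QuaternionAlgebra.imI_coe]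
        ring
      · simp only [hq, QuaternionAlgebra.imJ_mul, QuaternionAlgebra.imJ_coe]
        ring
      · simp only [hq, QuaternionAlgebra.imK_mul, QuaternionAlgebra.imK_coe]
        ring
    have haev : aeval q f = 0 := by
      simp only [hf, map_sub, map_pow, aeval_X, aeval_C, QuaternionAlgebra.coe_algebraMap]
      rw [sq, hsq]
      exact sub_self _
    have hker : ∀ p ∈ Ideal.span {f}, (aeval q : ℚ[X] →ₐ[ℚ] ℍ[ℚ, a, b]) p = 0 := by
      intro p hp
      obtain ⟨c, rfl⟩ := Ideal.mem_span_singleton.mp hp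
      rw [map_mul, haev, zero_mul]
    rw [Set.image_univ, Set.mem_range]
    refine ⟨Ideal.Quotient.liftₐ _ (aeval q) hker, ?_⟩
    have hroot' : (Ideal.Quotient.liftₐ _ (aeval q) hker) (AdjoinRoot.root f) = q :=
      (Ideal.Quotient.liftₐ_apply _ _ _ _).trans (aeval_X q)
    exact (congrArg (fun w : ℍ[ℚ, a, b] => (w.imI, w.imJ, w.imK)) hroot').trans rfl
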